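/- For each integer n ≥ 2, f_{n−2}(n) = n!/2. -/

import Mathlib

/-- The string (as a list) obtained from the one-line notation of `σ`
by deleting all symbols in `A`. -/
def ulamDel {n : ℕ} (σ : Equiv.Perm (Fin n)) (A : Finset (Fin n)) : List (Fin n) :=
  (List.ofFn fun i => σ i).filter (fun x => decide (x ∉ A))

/-- The Ulam distance between two permutations: the least number of distinct
symbols that must be deleted from each until they are equal. -/
noncomputable def ulamDist {n : ℕ} (α β : Equiv.Perm (Fin n)) : ℕ :=
  sInf {m | ∃ A : Finset (Fin n), A.card = m ∧ ulamDel α A = ulamDel β A}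

/-- `f_k(n)`: the maximum size of a set `F ⊆ S_n` such that `d_U(α, β) ≤ k`
for all `α, β ∈ F`. -/
noncomputable def maxDiamFamily (n k : ℕ) : ℕ :=
  sSup {m | ∃ F : Finset (Equiv.Perm (Fin n)), F.card = m ∧
    ∀ α ∈ F, ∀ β ∈ F, ulamDist α β ≤ k}

lemma ofFn_reverse' {α : Type*} {n : ℕ} (f : Fin n → α) :
    (List.ofFn f).reverse = List.ofFn (fun i => f i.rev) := by
  apply List.ext_getElem
  · simp
  · intro i h1 h2
    simp only [List.getElem_reverse, List.getElem_ofFn]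
    congr 1
    simp only [List.length_reverse, List.length_ofFn] at h1 h2
    ext
    simp [Fin.rev]
    omega

lemma filter_pair' {n : ℕ} (a b : Fin n) (hab : a < b) :
    (List.finRange n).filter (fun i => decide (i = a ∨ i = b)) = [a, b] := by
  set L := (List.finRange n).filter (fun i => decide (i = a ∨ i = b)) with hL
  have hmem : ∀ x, x ∈ L ↔ x = a ∨ x = b := by
    intro x
    simp [hL, List.mem_filter, List.mem_finRange]
  have hpw : L.Pairwise (· < ·) :=
    (List.pairwise_lt_finRange n).sublist List.filter_sublist
  have hnd : L.Nodup := hpw.imp (fun h => ne_of_lt h)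
  have htf : L.toFinset = {a, b} := by
    ext x
    simp [List.mem_toFinset, hmem, Finset.mem_insert]
  have hlen : L.length = 2 := by
    rw [← List.toFinset_card_of_nodup hnd, htf,
      Finset.card_insert_of_notMem (by simp [hab.ne]), Finset.card_singleton]
  obtain ⟨x, y, hxy⟩ := List.length_eq_two.mp hlen
  rw [hxy] at hpw hmem ⊢
  have hx := (hmem x).mp (by simp)
  have hy := (hmem y).mp (by simp)
  have hxlty : x < y := by
    rcases List.pairwise_cons.mp hpw with ⟨h1, _⟩
    exact h1 y (by simp)
  rcases hx with rfl | rfl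
  · rcases hy with rfl | rfl
    · exact absurd rfl (ne_of_lt hxlty)
    · rfl
  · rcases hy with rfl | rfl
    · exact absurd (hxlty.trans hab) (lt_irrefl _)
    · exact absurd rfl (ne_of_lt hxlty)

lemma ulamDel_pair' {n : ℕ} (σ : Equiv.Perm (Fin n)) (a b : Fin n)
    (h : σ.symm a < σ.symm b) :
    ulamDel σ ({a, b} : Finset (Fin n))ᶜ = [a, b] := by
  unfold ulamDel
  rw [List.ofFn_eq_map, List.filter_map]
  have : (fun x => decide (x ∉ ({a, b} : Finset (Fin n))ᶜ)) ∘ σ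
      = fun i => decide (i = σ.symm a ∨ i = σ.symm b) := by
    funext i
    simp only [Function.comp_apply, Finset.mem_compl, not_not, Finset.mem_insert,
      Finset.mem_singleton, decide_eq_decide]
    constructor
    · rintro (h' | h') <;> simp [← h']
    · rintro (rfl | rfl) <;> simp
  rw [this, filter_pair' _ _ h]
  simp

lemma ulamDel_revPerm' {n : ℕ} (σ : Equiv.Perm (Fin n)) (A : Finset (Fin n)) :
    ulamDel ((Fin.revPerm).trans σ) A = (ulamDel σ A).reverse := by
  unfold ulamDel
  rw [← List.filter_reverse, ofFn_reverse']
  rfl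

lemma ulamDel_nodup' {n : ℕ} (σ : Equiv.Perm (Fin n)) (A : Finset (Fin n)) :
    (ulamDel σ A).Nodup := by
  apply List.Nodup.filter
  rw [List.ofFn_eq_map]
  exact (List.nodup_finRange n).map σ.injective

lemma ulamDel_length' {n : ℕ} (σ : Equiv.Perm (Fin n)) (A : Finset (Fin n)) :
    (ulamDel σ A).length = n - A.card := by
  rw [← List.toFinset_card_of_nodup (ulamDel_nodup' σ A)]
  have : (ulamDel σ A).toFinset = Aᶜ := by
    ext x
    simp only [ulamDel, List.mem_toFinset, List.mem_filter, Finset.mem_compl,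
      decide_eq_true_eq, and_iff_right_iff_imp, List.mem_ofFn]
    exact fun _ => ⟨σ.symm x, by simp⟩
  rw [this, Finset.card_compl, Fintype.card_fin]

lemma ulamDist_rev_not_le {n : ℕ} (hn : 2 ≤ n) (σ : Equiv.Perm (Fin n)) :
    ¬ ulamDist σ ((Fin.revPerm).trans σ) ≤ n - 2 := by
  intro hle
  set S := {m | ∃ A : Finset (Fin n), A.card = m ∧
    ulamDel σ A = ulamDel ((Fin.revPerm).trans σ) A} with hS
  have hne : S.Nonempty := by
    refine ⟨n, Finset.univ, by simp, ?_⟩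
    unfold ulamDel
    simp
  have hmem := Nat.sInf_mem hne
  obtain ⟨A, hAcard, hAeq⟩ := hmem
  rw [ulamDel_revPerm'] at hAeq
  have hlen : 2 ≤ (ulamDel σ A).length := by
    rw [ulamDel_length', hAcard]
    have : sInf S ≤ n - 2 := hle
    omega
  have hnd := ulamDel_nodup' σ A
  set L := ulamDel σ A with hLdef
  have h0q : L[0]? = L.reverse[0]? := congrArg (·[0]?) hAeq
  rw [List.getElem?_eq_getElem (by omega),
    List.getElem?_eq_getElem (by rw [List.length_reverse]; omega),
    List.getElem_reverse] at h0q
  have h0 := Option.some.inj h0q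
  have h01 : (0 : ℕ) = L.length - 1 - 0 := (List.Nodup.getElem_inj_iff hnd).mp h0
  omega

/-- For each integer `n ≥ 2`, `f_{n−2}(n) = n!/2`. -/
theorem maxDiamFamily_n_sub_two (n : ℕ) (hn : 2 ≤ n) :
    maxDiamFamily n (n - 2) = n.factorial / 2 := by
  obtain ⟨m, rfl⟩ : ∃ m, n = m + 2 := ⟨n - 2, by omega⟩
  have hsub : m + 2 - 2 = m := by omega
  set r : Equiv.Perm (Fin (m + 2)) → Equiv.Perm (Fin (m + 2)) :=
    fun σ => (Fin.revPerm).trans σ with hr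
  have hrr : ∀ σ, r (r σ) = σ := by
    intro σ; ext i; simp [hr]
  have hrinj : Function.Injective r := by
    intro a b h
    rw [← hrr a, h, hrr]
  have hbdd : BddAbove {k | ∃ F : Finset (Equiv.Perm (Fin (m + 2))), F.card = k ∧
      ∀ α ∈ F, ∀ β ∈ F, ulamDist α β ≤ m + 2 - 2} := by
    refine ⟨(m + 2).factorial, ?_⟩
    rintro k ⟨F, rfl, -⟩
    calc F.card ≤ Fintype.card (Equiv.Perm (Fin (m + 2))) := F.card_le_univ
    _ = (m + 2).factorial := by simp [Fintype.card_perm]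
  apply le_antisymm
  · -- upper bound
    apply csSup_le
    · exact ⟨0, ∅, by simp⟩
    rintro k ⟨F, rfl, hF⟩
    -- F and F.image r are disjoint
    have hdisj : Disjoint F (F.image r) := by
      rw [Finset.disjoint_right]
      intro σ hσim hσF
      obtain ⟨τ, hτF, rfl⟩ := Finset.mem_image.mp hσim
      have := hF τ hτF (r τ) hσF
      rw [hsub] at this
      exact ulamDist_rev_not_le (by omega) τ this
    have hcard : F.card + F.card ≤ (m + 2).factorial := by
      have h1 : (F ∪ F.image r).card = F.card + (F.image r).card :=
        Finset.card_union_of_disjoint hdisj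
      have h2 : (F.image r).card = F.card := Finset.card_image_of_injective _ hrinj
      calc F.card + F.card = (F ∪ F.image r).card := by rw [h1, h2]
      _ ≤ Fintype.card (Equiv.Perm (Fin (m + 2))) := Finset.card_le_univ _
      _ = (m + 2).factorial := by simp [Fintype.card_perm]
    omega
  · -- lower bound
    apply le_csSup hbdd
    set p : Equiv.Perm (Fin (m + 2)) → Prop :=
      fun σ => σ.symm 0 < σ.symm (Fin.last (m + 1)) with hp
    have h0last : (0 : Fin (m + 2)) ≠ Fin.last (m + 1) := by
      intro h
      have := congrArg Fin.val h
      simp [Fin.last] at this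
    refine ⟨Finset.univ.filter p, ?_, ?_⟩
    · -- cardinality
      have hcards : (Finset.univ.filter p).card = (Finset.univ.filter (fun σ => ¬ p σ)).card := by
        apply Finset.card_bij' (fun σ _ => r σ) (fun σ _ => r σ)
        · intro σ hσ
          simp only [Finset.mem_filter, Finset.mem_univ, true_and] at hσ ⊢
          simp only [hp, hr] at hσ ⊢
          simp only [Equiv.symm_trans_apply, Fin.revPerm_symm, not_lt]
          simp only [Fin.revPerm_apply]
          exact le_of_lt (by rw [Fin.rev_lt_rev]; exact hσ)
        · intro σ hσ
          simp only [Finset.mem_filter, Finset.mem_univ, true_and] at hσ ⊢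
          simp only [hp, hr, not_lt] at hσ ⊢
          simp only [Equiv.symm_trans_apply, Fin.revPerm_symm, Fin.revPerm_apply]
          rw [Fin.rev_lt_rev]
          rcases lt_or_eq_of_le hσ with h | h
          · exact h
          · exact absurd (σ.symm.injective h) (fun hh => h0last hh.symm)
        · intro σ _; exact hrr σ
        · intro σ _; exact hrr σ
      have hsum := Finset.card_filter_add_card_filter_not
        (s := Finset.univ) (p := p)
      have huniv : (Finset.univ : Finset (Equiv.Perm (Fin (m + 2)))).card
          = (m + 2).factorial := by simp [Fintype.card_perm]
      omega
    · -- pairwise distance bound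
      intro α hα β hβ
      simp only [Finset.mem_filter, Finset.mem_univ, true_and, hp] at hα hβ
      rw [hsub]
      apply Nat.sInf_le
      refine ⟨({0, Fin.last (m + 1)} : Finset (Fin (m + 2)))ᶜ, ?_, ?_⟩
      · rw [Finset.card_compl, Fintype.card_fin,
          Finset.card_insert_of_notMem (by simp [h0last]), Finset.card_singleton]
        omega
      · rw [ulamDel_pair' α _ _ hα, ulamDel_pair' β _ _ hβ]
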